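/- Let κ be a regular cardinal with κ^{<κ} = κ. If GMP_{κ⁺⁺}(κ⁺³) holds, then the tree property TP(κ⁺⁺) holds, i.e., every κ⁺⁺-tree has a cofinal branch. -/

import Mathlib

/-!
Formalization over the ZFC universe `ZFSet`.  We view `H(θ)` as the collection
of ZF-sets whose transitive closure has cardinality `< θ`, and `M ≺ H(θ)` as
elementarity for the first-order language with a single binary relation
(interpreted as membership).  Cardinals and ordinals of the set-theoretic
universe are rendered as `Cardinal.{1}` and `Ordinal.{1}`, matching the
cardinalities and order types of (collections of) elements of `ZFSet : Type 1`.
-/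

open FirstOrder Cardinal

/-- A collection of ZF-sets viewed as a structure in the first-order language
with one binary relation (`FirstOrder.Language.graph`), interpreting the
relation symbol as membership. -/
def memStructure (A : Set ZFSet.{0}) : Language.graph.Structure A where
  funMap := fun f _ => f.elim
  RelMap := fun {n} r => match n, r with
    | 2, .adj => fun x => ((x 0 : ZFSet) ∈ (x 1 : ZFSet))

/-- `φ` is realized by the assignment `v` in the membership structure on `A`. -/
def realizeIn (A : Set ZFSet.{0}) {n : ℕ} (φ : Language.graph.Formula (Fin n))
    (v : Fin n → A) : Prop :=
  letI := memStructure A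
  φ.Realize v

/-- `M ≺ N`: `M` is an elementary submodel of `N` with respect to the
membership relation. -/
def IsElemSubmodel (M N : Set ZFSet.{0}) : Prop :=
  ∃ h : M ⊆ N, ∀ (n : ℕ) (φ : Language.graph.Formula (Fin n)) (v : Fin n → M),
    realizeIn N φ (fun i => Set.inclusion h (v i)) ↔ realizeIn M φ v

/-- `H(θ)`: the collection of ZF-sets whose transitive closure has cardinality
less than `θ`. -/
def HSet (θ : Cardinal.{1}) : Set ZFSet.{0} :=
  { x | #{ y : ZFSet.{0} | Relation.TransGen (· ∈ ·) y x } < θ }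

/-- `d` is `(κ⁺, M)`-approximated: `d ∩ z ∈ M` for every `z ∈ M` with
`z ⊆ M` and `|z| ≤ κ`. -/
def IsApproximated (κ : Cardinal.{1}) (M : Set ZFSet.{0}) (d : ZFSet.{0}) : Prop :=
  ∀ z : ZFSet.{0}, z ∈ M → z.toSet ⊆ M → #↥z.toSet ≤ κ → d ∩ z ∈ M

/-- `d` is `M`-guessed: there is `e ∈ M` with `e ∩ M = d ∩ M`. -/
def IsGuessed (M : Set ZFSet.{0}) (d : ZFSet.{0}) : Prop :=
  ∃ e ∈ M, e.toSet ∩ M = d.toSet ∩ M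

/-- `M` is a `κ⁺`-guessing model (as a submodel of `H(θ)`): an elementary
submodel of `H(θ)` of cardinality `κ⁺`, closed under sequences of length `< κ`,
in which every `(κ⁺, M)`-approximated subset of an element of `M` is
`M`-guessed. -/
structure IsGuessingModel (κ θ : Cardinal.{1}) (M : Set ZFSet.{0}) : Prop where
  elem : IsElemSubmodel M (HSet θ)
  card : #↥M = Order.succ κ
  closed : ∀ z : ZFSet.{0}, z.toSet ⊆ M → #↥z.toSet < κ → z ∈ M
  guess : ∀ x ∈ M, ∀ d : ZFSet.{0}, d ⊆ x → IsApproximated κ M d → IsGuessed M d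

/-- `P_μ(X)`: subsets of `X` of cardinality less than `μ`. -/
def smallSubsets (μ : Cardinal.{1}) (X : Set ZFSet.{0}) : Set (Set ZFSet.{0}) :=
  { Y | Y ⊆ X ∧ #↥Y < μ }

/-- `C` is club in `P_μ(X)`: `⊆`-cofinal and closed under unions of
`⊆`-increasing chains of length less than `μ`. -/
def IsClubIn (μ : Cardinal.{1}) (X : Set ZFSet.{0}) (C : Set (Set ZFSet.{0})) : Prop :=
  C ⊆ smallSubsets μ X ∧
  (∀ a ∈ smallSubsets μ X, ∃ c ∈ C, a ⊆ c) ∧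
  ∀ δ : Ordinal.{1}, 0 < δ → δ.card < μ →
    ∀ f : Ordinal.{1} → Set ZFSet.{0},
      (∀ i < δ, f i ∈ C) → (∀ i j, i ≤ j → j < δ → f i ⊆ f j) →
      (⋃ i ∈ Set.Iio δ, f i) ∈ C

/-- `S` is stationary in `P_μ(X)`: `S` meets every club subset of `P_μ(X)`. -/
def IsStationaryIn (μ : Cardinal.{1}) (X : Set ZFSet.{0}) (S : Set (Set ZFSet.{0})) : Prop :=
  S ⊆ smallSubsets μ X ∧ ∀ C, IsClubIn μ X C → (S ∩ C).Nonempty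

/-- The guessing model principle `GMP_{κ⁺⁺}(θ)`: the set of
`M ∈ P_{κ⁺⁺}(H(θ))` that are `κ⁺`-guessing models is stationary in
`P_{κ⁺⁺}(H(θ))`. -/
def GMP (κ θ : Cardinal.{1}) : Prop :=
  IsStationaryIn (Order.succ (Order.succ κ)) (HSet θ)
    { M | M ∈ smallSubsets (Order.succ (Order.succ κ)) (HSet θ) ∧ IsGuessingModel κ θ M }

/-- A von Neumann ordinal: a transitive ZF-set linearly ordered by
membership. -/
def IsVonNeumannOrdinal (x : ZFSet.{0}) : Prop :=
  (∀ y ∈ x, y ⊆ x) ∧ ∀ y ∈ x, ∀ z ∈ x, y ∈ z ∨ y = z ∨ z ∈ y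

/-- The ordinal coded by a (von Neumann ordinal) ZF-set: the order type of
membership on it. -/
noncomputable def ordOf (x : ZFSet.{0}) : Ordinal.{1} :=
  letI := Classical.dec (IsWellOrder ↥x.toSet fun a b => (a : ZFSet) ∈ (b : ZFSet))
  if h : IsWellOrder ↥x.toSet (fun a b => (a : ZFSet) ∈ (b : ZFSet)) then
    @Ordinal.type ↥x.toSet (fun a b => (a : ZFSet) ∈ (b : ZFSet)) h
  else 0

/-- A tree coded in the ZF universe: a set of nodes together with a set of
(Kuratowski) pairs coding a strict partial order in which the set of
predecessors of every node is well-ordered. -/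
structure ZFTree where
  nodes : ZFSet.{0}
  rel : ZFSet.{0}
  rel_sub : ∀ p ∈ rel, ∃ a ∈ nodes, ∃ b ∈ nodes, p = ZFSet.pair a b
  lt_irrefl : ∀ a, ZFSet.pair a a ∉ rel
  lt_trans : ∀ a b c, ZFSet.pair a b ∈ rel → ZFSet.pair b c ∈ rel → ZFSet.pair a c ∈ rel
  pred_wellOrder : ∀ t ∈ nodes,
    IsWellOrder {s : ZFSet.{0} // ZFSet.pair s t ∈ rel} fun a b => ZFSet.pair a.1 b.1 ∈ rel

namespace ZFTree

/-- The strict order relation of the tree. -/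
def Lt (T : ZFTree) (a b : ZFSet.{0}) : Prop := ZFSet.pair a b ∈ T.rel

/-- The height of a node: the order type of its set of predecessors. -/
noncomputable def nodeHeight (T : ZFTree) (t : ZFSet.{0}) : Ordinal.{1} :=
  letI := Classical.dec (IsWellOrder {s : ZFSet.{0} // T.Lt s t} fun a b => T.Lt a.1 b.1)
  if h : IsWellOrder {s : ZFSet.{0} // T.Lt s t} fun a b => T.Lt a.1 b.1 then
    @Ordinal.type {s : ZFSet.{0} // T.Lt s t} (fun a b => T.Lt a.1 b.1) h
  else 0

/-- The `α`-th level of the tree: nodes of height `α`. -/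
def level (T : ZFTree) (α : Ordinal.{1}) : Set ZFSet.{0} :=
  { t ∈ T.nodes.toSet | T.nodeHeight t = α }

/-- The height of the tree: the least ordinal whose level is empty. -/
noncomputable def height (T : ZFTree) : Ordinal.{1} :=
  sInf { α | T.level α = ∅ }

/-- A cofinal branch: a chain containing nodes of every height below the
height of the tree. -/
def IsCofinalBranch (T : ZFTree) (B : Set ZFSet.{0}) : Prop :=
  B ⊆ T.nodes.toSet ∧
  (∀ a ∈ B, ∀ b ∈ B, a ≠ b → T.Lt a b ∨ T.Lt b a) ∧
  ∀ α < T.height, ∃ b ∈ B, T.nodeHeight b = α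

/-- A `λ`-tree: a tree of height `λ` all of whose levels have cardinality
less than `λ`. -/
def IsLambdaTree (lam : Cardinal.{1}) (T : ZFTree) : Prop :=
  T.height = lam.ord ∧ ∀ α : Ordinal.{1}, #↥(T.level α) < lam

end ZFTree


theorem ZFSet.mem_toSet (a u : ZFSet.{0}) : a ∈ u.toSet ↔ a ∈ u := Iff.rfl

theorem ZFSet.toSet_empty : (∅ : ZFSet.{0}).toSet = ∅ := ZFSet.coe_empty

instance ZFSet.small_toSet (x : ZFSet.{0}) : Small.{0} x.toSet := ZFSet.small_coe x

def towo (o : Ordinal.{u}) : IsWellOrder o.ToType (· < ·) := isWellOrder_lt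

noncomputable def vN0 : Ordinal.{0} → ZFSet.{0} :=
  Ordinal.lt_wf.fix fun o ih =>
    ZFSet.range fun i : o.ToType =>
      ih (@Ordinal.typein _ (· < ·) (towo o) i)
        ((@Ordinal.typein_lt_type _ (· < ·) (towo o) i).trans_eq (Ordinal.type_toType o))

theorem vN0_def (o : Ordinal.{0}) :
    vN0 o = ZFSet.range fun i : o.ToType => vN0 (@Ordinal.typein _ (· < ·) (towo o) i) :=
  Ordinal.lt_wf.fix_eq _ o

theorem mem_vN0 {y : ZFSet.{0}} {o : Ordinal.{0}} :
    y ∈ vN0 o ↔ ∃ b < o, y = vN0 b := by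
  rw [vN0_def, ZFSet.mem_range]
  constructor
  · rintro ⟨i, rfl⟩
    exact ⟨_, (@Ordinal.typein_lt_type _ (· < ·) (towo o) i).trans_eq (Ordinal.type_toType o), rfl⟩
  · rintro ⟨b, hb, rfl⟩
    obtain ⟨i, hi⟩ := @Ordinal.typein_surj _ (· < ·) (towo o) _
      (hb.trans_eq (Ordinal.type_toType o).symm)
    exact ⟨i, congrArg vN0 hi⟩

theorem vN0_mem_vN0 {b o : Ordinal.{0}} (h : b < o) : vN0 b ∈ vN0 o :=
  mem_vN0.2 ⟨b, h, rfl⟩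

theorem vN0_injective : Function.Injective vN0 := by
  intro a b h
  by_contra ne
  rcases lt_or_gt_of_ne ne with hl | hl
  · exact ZFSet.mem_irrefl _ (h ▸ vN0_mem_vN0 hl)
  · exact ZFSet.mem_irrefl _ (h ▸ vN0_mem_vN0 hl :)

/-! ### von Neumann ordinals indexed by `Ordinal.{1}` -/

open scoped Classical in
noncomputable def vN (α : Ordinal.{1}) : ZFSet.{0} :=
  if h : α ∈ Set.range Ordinal.lift.{1, 0} then vN0 h.choose else ∅

open scoped Classical in
theorem vN_lift (b : Ordinal.{0}) : vN (Ordinal.lift.{1, 0} b) = vN0 b := by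
  have h : Ordinal.lift.{1, 0} b ∈ Set.range Ordinal.lift.{1, 0} := ⟨b, rfl⟩
  rw [vN, dif_pos h]
  congr 1
  exact Ordinal.lift_inj.1 h.choose_spec

theorem range_lift_lower {α β : Ordinal.{1}} (hα : α ∈ Set.range Ordinal.lift.{1, 0})
    (h : β ≤ α) : β ∈ Set.range Ordinal.lift.{1, 0} := by
  obtain ⟨a, rfl⟩ := hα
  exact Ordinal.mem_range_lift_of_le h

theorem mem_vN {α : Ordinal.{1}} (hα : α ∈ Set.range Ordinal.lift.{1, 0}) {y : ZFSet.{0}} :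
    y ∈ vN α ↔ ∃ β < α, y = vN β := by
  obtain ⟨a, rfl⟩ := hα
  rw [vN_lift, mem_vN0]
  constructor
  · rintro ⟨b, hb, rfl⟩
    exact ⟨Ordinal.lift b, Ordinal.lift_lt.2 hb, (vN_lift b).symm⟩
  · rintro ⟨β, hβ, rfl⟩
    obtain ⟨b, rfl⟩ := Ordinal.mem_range_lift_of_le hβ.le
    exact ⟨b, Ordinal.lift_lt.1 hβ, vN_lift b⟩

theorem vN_mem_vN {β α : Ordinal.{1}} (hα : α ∈ Set.range Ordinal.lift.{1, 0})
    (h : β < α) : vN β ∈ vN α :=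
  (mem_vN hα).2 ⟨β, h, rfl⟩

theorem vN_inj {α β : Ordinal.{1}} (hα : α ∈ Set.range Ordinal.lift.{1, 0})
    (hβ : β ∈ Set.range Ordinal.lift.{1, 0}) (h : vN α = vN β) : α = β := by
  obtain ⟨a, rfl⟩ := hα
  obtain ⟨b, rfl⟩ := hβ
  rw [vN_lift, vN_lift] at h
  rw [vN0_injective h]

theorem vN_mem_vN_iff {β α : Ordinal.{1}} (hα : α ∈ Set.range Ordinal.lift.{1, 0})
    (hβ : β ∈ Set.range Ordinal.lift.{1, 0}) : vN β ∈ vN α ↔ β < α := by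
  refine ⟨fun h => ?_, vN_mem_vN hα⟩
  obtain ⟨γ, hγ, he⟩ := (mem_vN hα).1 h
  rwa [vN_inj hβ (range_lift_lower hα hγ.le) he]

theorem vN_transitive {α : Ordinal.{1}} (hα : α ∈ Set.range Ordinal.lift.{1, 0}) :
    ∀ y ∈ vN α, y ⊆ vN α := by
  intro y hy
  obtain ⟨β, hβ, rfl⟩ := (mem_vN hα).1 hy
  intro z hz
  obtain ⟨γ, hγ, rfl⟩ := (mem_vN (range_lift_lower hα hβ.le)).1 hz
  exact vN_mem_vN hα (hγ.trans hβ)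

theorem vN_toSet {α : Ordinal.{1}} (hα : α ∈ Set.range Ordinal.lift.{1, 0}) :
    (vN α).toSet = vN '' Set.Iio α := by
  ext y
  simp only [ZFSet.mem_toSet, Set.mem_image, Set.mem_Iio]
  rw [mem_vN hα]
  exact ⟨fun ⟨β, h, e⟩ => ⟨β, h, e.symm⟩, fun ⟨β, h, e⟩ => ⟨β, h, e.symm⟩⟩

theorem vN_card {α : Ordinal.{1}} (hα : α ∈ Set.range Ordinal.lift.{1, 0}) :
    #(vN α).toSet ≤ α.card := by
  obtain ⟨a, rfl⟩ := hα
  have : (vN (Ordinal.lift.{1,0} a)).toSet =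
      Set.range fun i : a.ToType => vN0 (@Ordinal.typein _ (· < ·) (towo a) i) := by
    ext y
    rw [ZFSet.mem_toSet, vN_lift, vN0_def, ZFSet.mem_range, Set.mem_range]
  rw [this, ← Ordinal.lift_card]
  have h2 := Cardinal.mk_range_le_lift
    (f := fun i : a.ToType => vN0 (@Ordinal.typein _ (· < ·) (towo a) i))
  rw [Cardinal.lift_id'] at h2
  simpa [Cardinal.mk_toType] using h2


/-! ### The transitive closure and `HSet` -/

def tcSet (x : ZFSet.{0}) : Set ZFSet.{0} := { y | Relation.TransGen (· ∈ ·) y x }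

theorem mem_HSet {θ : Cardinal.{1}} {x : ZFSet.{0}} : x ∈ HSet θ ↔ #(tcSet x) < θ := Iff.rfl

theorem mem_HSet_of_mem {θ : Cardinal.{1}} {x y : ZFSet.{0}} (hx : x ∈ HSet θ) (h : y ∈ x) :
    y ∈ HSet θ := by
  refine lt_of_le_of_lt (Cardinal.mk_le_mk_of_subset fun z hz => ?_) hx
  exact Relation.TransGen.tail hz h

theorem tcSet_eq_toSet_of_transitive {x : ZFSet.{0}} (h : ∀ y ∈ x, y ⊆ x) :
    tcSet x = x.toSet := by
  ext z
  constructor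
  · intro hz
    induction hz using Relation.TransGen.head_induction_on with
    | single hb => exact hb
    | head hac _ ih => exact h _ ih hac
  · exact fun hz => Relation.TransGen.single hz

theorem mem_HSet_of {θ : Cardinal.{1}} (hreg : θ.IsRegular) {x : ZFSet.{0}}
    (h1 : #x.toSet < θ) (h2 : ∀ y ∈ x.toSet, y ∈ HSet θ) : x ∈ HSet θ := by
  have hsub : tcSet x ⊆ x.toSet ∪ ⋃ y : x.toSet, tcSet y.1 := by
    intro z hz
    obtain ⟨b, hzb, hbx⟩ := Relation.TransGen.tail'_iff.1 hz
    rcases Relation.reflTransGen_iff_eq_or_transGen.1 hzb with rfl | htg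
    · exact Or.inl hbx
    · exact Or.inr (Set.mem_iUnion.2 ⟨⟨b, hbx⟩, htg⟩)
  refine lt_of_le_of_lt (Cardinal.mk_le_mk_of_subset hsub) ?_
  refine lt_of_le_of_lt (Cardinal.mk_union_le _ _) ?_
  refine Cardinal.add_lt_of_lt hreg.aleph0_le h1 ?_
  refine lt_of_le_of_lt Cardinal.mk_iUnion_le_sum_mk ?_
  exact Cardinal.sum_lt_of_isRegular hreg h1 fun y => h2 y.1 y.2

theorem vN_mem_HSet {θ : Cardinal.{1}} (hreg : θ.IsRegular) :
    ∀ α : Ordinal.{1}, α ∈ Set.range Ordinal.lift.{1, 0} → α.card < θ → vN α ∈ HSet θ := by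
  intro α
  induction α using Ordinal.induction with
  | h α IH =>
    intro hα hcard
    refine mem_HSet_of hreg (lt_of_le_of_lt (vN_card hα) hcard) ?_
    intro y hy
    obtain ⟨β, hβ, rfl⟩ := (mem_vN hα).1 hy
    exact IH β hβ (range_lift_lower hα hβ.le) (lt_of_le_of_lt (Ordinal.card_le_card hβ.le) hcard)

theorem mk_toSet_le_of_subset {x y : ZFSet.{0}} (h : x ⊆ y) : #x.toSet ≤ #y.toSet :=
  Cardinal.mk_le_mk_of_subset fun z hz => h hz


/-! ### A club of closure points -/

theorem isClubIn_closure {μ : Cardinal.{1}} (hμ : μ.IsRegular) (hμ0 : ℵ₀ < μ)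
    {X : Set ZFSet.{0}} (g : ZFSet.{0} → Set ZFSet.{0}) (x₀ : ZFSet.{0}) (hx₀ : x₀ ∈ X)
    (hg : ∀ w ∈ X, g w ⊆ X) (hgc : ∀ w, #(g w) < μ) :
    IsClubIn μ X { Y | Y ∈ smallSubsets μ X ∧ x₀ ∈ Y ∧ ∀ w ∈ Y, g w ⊆ Y } := by
  refine ⟨fun Y hY => hY.1, ?_, ?_⟩
  · -- cofinality
    intro a ha
    set Y : ℕ → Set ZFSet.{0} := fun n =>
      Nat.rec (a ∪ {x₀}) (fun _ Yn => Yn ∪ ⋃ w : Yn, g w.1) n with hY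
    have hYmono : ∀ n, Y n ⊆ Y (n + 1) := fun n => Set.subset_union_left
    have hYX : ∀ n, Y n ⊆ X := by
      intro n
      induction n with
      | zero => exact Set.union_subset ha.1 (by simpa using hx₀)
      | succ n ih =>
        refine Set.union_subset ih ?_
        exact Set.iUnion_subset fun w => hg w.1 (ih w.2)
    have hYcard : ∀ n, #(Y n) < μ := by
      intro n
      induction n with
      | zero =>
        refine lt_of_le_of_lt (Cardinal.mk_union_le _ _) ?_
        refine Cardinal.add_lt_of_lt hμ.aleph0_le ha.2 ?_
        exact lt_of_le_of_lt (le_of_eq (Cardinal.mk_singleton _)) (lt_of_le_of_lt Cardinal.one_le_aleph0 hμ0)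
      | succ n ih =>
        refine lt_of_le_of_lt (Cardinal.mk_union_le _ _) ?_
        refine Cardinal.add_lt_of_lt hμ.aleph0_le ih ?_
        refine lt_of_le_of_lt Cardinal.mk_iUnion_le_sum_mk ?_
        exact Cardinal.sum_lt_of_isRegular hμ ih fun w => hgc w.1
    refine ⟨⋃ n : ULift.{1} ℕ, Y n.down, ⟨⟨Set.iUnion_subset fun n => hYX n.down, ?_⟩, ?_, ?_⟩, ?_⟩
    · refine lt_of_le_of_lt Cardinal.mk_iUnion_le_sum_mk ?_
      refine Cardinal.sum_lt_of_isRegular hμ ?_ fun n => hYcard n.down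
      simpa using hμ0
    · exact Set.mem_iUnion.2 ⟨⟨0⟩, Or.inr rfl⟩
    · intro w hw
      obtain ⟨n, hn⟩ := Set.mem_iUnion.1 hw
      refine fun u hu => Set.mem_iUnion.2 ⟨⟨n.down + 1⟩, Or.inr ?_⟩
      exact Set.mem_iUnion.2 ⟨⟨w, hn⟩, hu⟩
    · exact fun u hu => Set.mem_iUnion.2 ⟨⟨0⟩, Or.inl hu⟩
  · -- chain closure
    intro δ hδ0 hδcard f hfC hfmono
    have hsub : ∀ i < δ, f i ⊆ ⋃ j ∈ Set.Iio δ, f j := by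
      intro i hi u hu
      exact Set.mem_biUnion hi hu
    have hU : (⋃ j ∈ Set.Iio δ, f j) = ⋃ i : δ.ToType, f (@Ordinal.typein _ (· < ·) (towo δ) i) := by
      ext u
      simp only [Set.mem_iUnion, Set.mem_Iio]
      constructor
      · rintro ⟨i, hi, hu⟩
        obtain ⟨j, hj⟩ := @Ordinal.typein_surj _ (· < ·) (towo δ) i
          (hi.trans_eq (Ordinal.type_toType δ).symm)
        exact ⟨j, by rwa [hj]⟩
      · rintro ⟨j, hu⟩
        exact ⟨_, (@Ordinal.typein_lt_type _ (· < ·) (towo δ) j).trans_eq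
          (Ordinal.type_toType δ), hu⟩
    refine ⟨⟨?_, ?_⟩, ?_, ?_⟩
    · intro u hu
      obtain ⟨i, hi, hu⟩ := Set.mem_iUnion₂.1 hu
      exact (hfC i hi).1.1 hu
    · rw [hU]
      refine lt_of_le_of_lt Cardinal.mk_iUnion_le_sum_mk ?_
      refine Cardinal.sum_lt_of_isRegular hμ ?_ ?_
      · simpa [Cardinal.mk_toType] using hδcard
      · intro j
        exact (hfC _ ((@Ordinal.typein_lt_type _ (· < ·) (towo δ) j).trans_eq
          (Ordinal.type_toType δ))).1.2
    · exact hsub 0 hδ0 (hfC 0 hδ0).2.1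
    · intro w hw
      obtain ⟨i, hi, hwi⟩ := Set.mem_iUnion₂.1 hw
      exact fun u hu => hsub i hi ((hfC i hi).2.2 w hwi hu)


/-! ### Basic tree lemmas -/

namespace ZFTree

variable {T : ZFTree}

theorem mem_nodes_of_lt {s t : ZFSet.{0}} (h : T.Lt s t) : s ∈ T.nodes ∧ t ∈ T.nodes := by
  obtain ⟨a, ha, b, hb, he⟩ := T.rel_sub _ h
  obtain ⟨rfl, rfl⟩ := ZFSet.pair_injective he
  exact ⟨ha, hb⟩

/-- The well-order on the predecessors of a node. -/
def predWO {t : ZFSet.{0}} (ht : t ∈ T.nodes) :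
    IsWellOrder {s : ZFSet.{0} // T.Lt s t} fun a b => T.Lt a.1 b.1 :=
  T.pred_wellOrder t ht

theorem nodeHeight_eq {t : ZFSet.{0}} (ht : t ∈ T.nodes) :
    T.nodeHeight t = @Ordinal.type _ (fun a b : {s : ZFSet.{0} // T.Lt s t} => T.Lt a.1 b.1)
      (predWO ht) := by
  rw [nodeHeight, dif_pos (predWO ht)]

theorem nodeHeight_eq_typein {t s : ZFSet.{0}} (ht : t ∈ T.nodes) (hs : T.Lt s t) :
    T.nodeHeight s =
      @Ordinal.typein _ (fun a b : {s' : ZFSet.{0} // T.Lt s' t} => T.Lt a.1 b.1)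
        (predWO ht) ⟨s, hs⟩ := by
  letI I1 := predWO (T := T) (mem_nodes_of_lt hs).1
  letI I2 := predWO (T := T) ht
  rw [nodeHeight_eq (mem_nodes_of_lt hs).1]
  rw [← @Ordinal.type_subrel _ (fun a b : {s' : ZFSet.{0} // T.Lt s' t} => T.Lt a.1 b.1)
    (predWO ht) ⟨s, hs⟩]
  refine Ordinal.type_eq.2 ⟨?_⟩
  refine RelIso.ofSurjective
    (RelEmbedding.ofMonotone (fun u => ⟨⟨u.1, T.lt_trans _ _ _ u.2 hs⟩, u.2⟩) ?_) ?_
  · exact fun a b hab => hab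
  · rintro ⟨⟨u, hut⟩, hus⟩
    exact ⟨⟨u, hus⟩, rfl⟩

theorem nodeHeight_lt_of_lt {t s : ZFSet.{0}} (ht : t ∈ T.nodes) (hs : T.Lt s t) :
    T.nodeHeight s < T.nodeHeight t := by
  letI I2 := predWO (T := T) ht
  rw [nodeHeight_eq_typein ht hs, nodeHeight_eq ht]
  exact Ordinal.typein_lt_type _ _

theorem exists_pred_at {t : ZFSet.{0}} (ht : t ∈ T.nodes) {α : Ordinal.{1}}
    (hα : α < T.nodeHeight t) : ∃ s, T.Lt s t ∧ T.nodeHeight s = α := by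
  letI I2 := predWO (T := T) ht
  rw [nodeHeight_eq ht] at hα
  obtain ⟨⟨s, hst⟩, he⟩ := @Ordinal.typein_surj _
    (fun a b : {s' : ZFSet.{0} // T.Lt s' t} => T.Lt a.1 b.1) (predWO ht) _ hα
  exact ⟨s, hst, (nodeHeight_eq_typein ht hst).trans he⟩

theorem pred_trichotomy {t s₁ s₂ : ZFSet.{0}} (ht : t ∈ T.nodes) (h₁ : T.Lt s₁ t)
    (h₂ : T.Lt s₂ t) : T.Lt s₁ s₂ ∨ s₁ = s₂ ∨ T.Lt s₂ s₁ := by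
  letI := predWO ht
  rcases @trichotomous _ (fun a b : {s' : ZFSet.{0} // T.Lt s' t} => T.Lt a.1 b.1) _
    ⟨s₁, h₁⟩ ⟨s₂, h₂⟩ with h | h | h
  · exact Or.inl h
  · exact Or.inr (Or.inl (congrArg Subtype.val h))
  · exact Or.inr (Or.inr h)

theorem level_nonempty {α : Ordinal.{1}} (h : α < T.height) : (T.level α).Nonempty := by
  rw [Set.nonempty_iff_ne_empty]
  intro he
  exact absurd (csInf_le' (s := { β | T.level β = ∅ }) he) (not_le.2 h)

theorem comparable_of_lt_same {t s₁ s₂ : ZFSet.{0}} (ht : t ∈ T.nodes) (h₁ : T.Lt s₁ t)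
    (h₂ : T.Lt s₂ t) (hne : s₁ ≠ s₂) : T.Lt s₁ s₂ ∨ T.Lt s₂ s₁ := by
  rcases pred_trichotomy ht h₁ h₂ with h | h | h
  · exact Or.inl h
  · exact absurd h hne
  · exact Or.inr h

end ZFTree


/-! ### Main construction context -/

structure Ctx where
  κ : Cardinal.{1}
  hreg : κ.IsRegular
  T : ZFTree
  hheight : T.height = (Order.succ (Order.succ κ)).ord
  hlev : ∀ α : Ordinal.{1}, #(T.level α) < Order.succ (Order.succ κ)

namespace Ctx

variable (C : Ctx)

/-- `λ = κ⁺⁺`. -/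
noncomputable def lam : Cardinal.{1} := Order.succ (Order.succ C.κ)

/-- `θ = κ⁺⁺⁺`. -/
noncomputable def θC : Cardinal.{1} := Order.succ C.lam

theorem aleph0_le_kappa : ℵ₀ ≤ C.κ := C.hreg.aleph0_le

theorem aleph0_le_succ_kappa : ℵ₀ ≤ Order.succ C.κ :=
  C.aleph0_le_kappa.trans (Order.le_succ _)

theorem lam_isRegular : C.lam.IsRegular :=
  Cardinal.isRegular_succ C.aleph0_le_succ_kappa

theorem aleph0_le_lam : ℵ₀ ≤ C.lam := C.lam_isRegular.aleph0_le

theorem aleph0_lt_lam : ℵ₀ < C.lam :=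
  lt_of_le_of_lt C.aleph0_le_kappa ((Order.lt_succ _).trans (Order.lt_succ _))

theorem θ_isRegular : C.θC.IsRegular := Cardinal.isRegular_succ C.aleph0_le_lam

theorem lam_lt_θ : C.lam < C.θC := Order.lt_succ _

theorem succ_kappa_lt_lam : Order.succ C.κ < C.lam := Order.lt_succ _

theorem lam_ord_isLimit : Order.IsSuccLimit C.lam.ord := Cardinal.isSuccLimit_ord C.aleph0_le_lam

theorem le_succ_kappa_of_lt_lam {c : Cardinal.{1}} (h : c < C.lam) : c ≤ Order.succ C.κ :=
  Order.lt_succ_iff.1 h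

theorem card_le_succ_kappa_of_lt {α : Ordinal.{1}} (h : α < C.lam.ord) :
    α.card ≤ Order.succ C.κ :=
  C.le_succ_kappa_of_lt_lam (Cardinal.lt_ord.1 h)

theorem level_card_le (α : Ordinal.{1}) : #(C.T.level α) ≤ Order.succ C.κ :=
  C.le_succ_kappa_of_lt_lam (C.hlev α)

theorem level_nonempty' {α : Ordinal.{1}} (h : α < C.lam.ord) : (C.T.level α).Nonempty :=
  ZFTree.level_nonempty (h.trans_eq C.hheight.symm)

/-- λ many nodes below height λ. -/
theorem lam_le_mk_nodes : C.lam ≤ #C.T.nodes.toSet := by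
  have g : ∀ i : C.lam.ord.ToType, ∃ s, s ∈ C.T.level (@Ordinal.typein _ (· < ·)
      (towo C.lam.ord) i) := by
    intro i
    exact C.level_nonempty' ((@Ordinal.typein_lt_type _ (· < ·) (towo C.lam.ord) i).trans_eq
      (Ordinal.type_toType _))
  choose g hg using g
  have hinj : Function.Injective fun i => (⟨g i, (hg i).1⟩ : C.T.nodes.toSet) := by
    intro i j hij
    have : C.T.nodeHeight (g i) = C.T.nodeHeight (g j) := by
      rw [show g i = g j from congrArg Subtype.val hij]
    rw [(hg i).2, (hg j).2] at this
    exact (@Ordinal.typein _ (· < ·) (towo C.lam.ord)).injective this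
  calc C.lam = #C.lam.ord.ToType := by rw [Cardinal.mk_toType, Cardinal.card_ord]
  _ ≤ #C.T.nodes.toSet := Cardinal.mk_le_of_injective hinj

theorem lam_ord_in_range : ∀ α ≤ C.lam.ord, α ∈ Set.range Ordinal.lift.{1, 0} := by
  have hsmall : Small.{0} C.T.nodes.toSet := ZFSet.small_toSet _
  have h1 : #C.T.nodes.toSet = Cardinal.lift.{1, 0} #(Shrink.{0} C.T.nodes.toSet) := by
    have := Cardinal.lift_mk_eq'.2 ⟨equivShrink.{0} C.T.nodes.toSet⟩
    rwa [Cardinal.lift_id'] at this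
  intro α hα
  refine Ordinal.mem_range_lift_of_le (a := (#(Shrink.{0} C.T.nodes.toSet)).ord) ?_
  calc α ≤ C.lam.ord := hα
  _ ≤ (#C.T.nodes.toSet).ord := Cardinal.ord_le_ord.2 C.lam_le_mk_nodes
  _ = (Cardinal.lift.{1,0} #(Shrink.{0} C.T.nodes.toSet)).ord := by rw [h1]
  _ = Ordinal.lift.{1,0} (#(Shrink.{0} C.T.nodes.toSet)).ord := by
      rw [Cardinal.lift_ord]

/-- The set of nodes of height less than `β`. -/
def nodesBelow (β : Ordinal.{1}) : Set ZFSet.{0} :=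
  { s | s ∈ C.T.nodes.toSet ∧ C.T.nodeHeight s < β }

theorem nodesBelow_eq (β : Ordinal.{1}) :
    C.nodesBelow β = ⋃ i : β.ToType, C.T.level (@Ordinal.typein _ (· < ·) (towo β) i) := by
  ext s
  simp only [Set.mem_iUnion]
  constructor
  · rintro ⟨hs, hlt⟩
    obtain ⟨i, hi⟩ := @Ordinal.typein_surj _ (· < ·) (towo β) _
      (hlt.trans_eq (Ordinal.type_toType β).symm)
    exact ⟨i, hs, by rw [hi]⟩
  · rintro ⟨i, hs, hh⟩
    exact ⟨hs, hh.symm ▸ ((@Ordinal.typein_lt_type _ (· < ·) (towo β) i).trans_eq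
      (Ordinal.type_toType β))⟩

theorem mk_nodesBelow_le (β : Ordinal.{1}) :
    #(C.nodesBelow β) ≤ β.card * Order.succ C.κ := by
  rw [nodesBelow_eq]
  refine le_trans (Cardinal.mk_iUnion_le _) ?_
  refine mul_le_mul' (le_of_eq (Cardinal.mk_toType β)) ?_
  exact ciSup_le' fun i => C.level_card_le _

/-- The relevant nodes: those of height `< λ`. -/
def relNodes : Set ZFSet.{0} := C.nodesBelow C.lam.ord

theorem mk_relNodes_le : #C.relNodes ≤ C.lam := by
  refine le_trans (C.mk_nodesBelow_le _) ?_
  rw [Cardinal.card_ord]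
  rw [Cardinal.mul_eq_max C.aleph0_le_lam (C.aleph0_le_kappa.trans (Order.le_succ _))]
  exact max_le le_rfl (le_of_lt C.succ_kappa_lt_lam)

/-- An injection of the relevant nodes into (the canonical type of order type) `λ`. -/
noncomputable def emb : ↥C.relNodes ↪ C.lam.ord.ToType :=
  (Cardinal.le_def _ _).1 (C.mk_relNodes_le.trans_eq
    (by rw [Cardinal.mk_toType, Cardinal.card_ord])) |>.some

/-- The ordinal code of a relevant node. -/
noncomputable def codeOrd (s : ↥C.relNodes) : Ordinal.{1} :=
  @Ordinal.typein _ (· < ·) (towo C.lam.ord) (C.emb s)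

theorem codeOrd_lt (s : ↥C.relNodes) : C.codeOrd s < C.lam.ord :=
  (@Ordinal.typein_lt_type _ (· < ·) (towo C.lam.ord) _).trans_eq (Ordinal.type_toType _)

theorem codeOrd_injective : Function.Injective C.codeOrd := fun a b h =>
  C.emb.injective ((@Ordinal.typein _ (· < ·) (towo C.lam.ord)).injective h)

/-- The ZF-set code of a relevant node. -/
noncomputable def code (s : ↥C.relNodes) : ZFSet.{0} := vN (C.codeOrd s)

theorem code_injective : Function.Injective C.code := by
  intro a b h
  exact C.codeOrd_injective (vN_inj (C.lam_ord_in_range _ (C.codeOrd_lt a).le)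
    (C.lam_ord_in_range _ (C.codeOrd_lt b).le) h)

/-- The ZF-set of all codes. -/
noncomputable def xC : ZFSet.{0} := vN C.lam.ord

theorem code_mem_xC (s : ↥C.relNodes) : C.code s ∈ C.xC :=
  vN_mem_vN (C.lam_ord_in_range _ le_rfl) (C.codeOrd_lt s)

theorem xC_mem_HSet : C.xC ∈ HSet C.θC :=
  vN_mem_HSet C.θ_isRegular _ (C.lam_ord_in_range _ le_rfl)
    (by rw [Cardinal.card_ord]; exact C.lam_lt_θ)

theorem mk_xC_toSet : #C.xC.toSet ≤ C.lam :=
  (vN_card (C.lam_ord_in_range _ le_rfl)).trans_eq (Cardinal.card_ord _)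

theorem mem_HSet_of_subset_xC {w : ZFSet.{0}} (h : w ⊆ C.xC) : w ∈ HSet C.θC := by
  refine mem_HSet_of C.θ_isRegular ?_ ?_
  · exact lt_of_le_of_lt (mk_toSet_le_of_subset h) (C.mk_xC_toSet.trans_lt C.lam_lt_θ)
  · exact fun y hy => mem_HSet_of_mem C.xC_mem_HSet (h hy)

/-- The set of codes of strict predecessors of a node `u`. -/
noncomputable def predSet (u : ZFSet.{0}) : ZFSet.{0} :=
  ZFSet.sep (fun c => ∃ s : ↥C.relNodes, C.code s = c ∧ C.T.Lt s.1 u) C.xC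

theorem predSet_subset (u : ZFSet.{0}) : C.predSet u ⊆ C.xC :=
  fun _ hz => (ZFSet.mem_sep.1 hz).1

theorem mem_predSet {u c : ZFSet.{0}} :
    c ∈ C.predSet u ↔ c ∈ C.xC ∧ ∃ s : ↥C.relNodes, C.code s = c ∧ C.T.Lt s.1 u :=
  ZFSet.mem_sep

theorem code_mem_predSet {u : ZFSet.{0}} {s : ↥C.relNodes} (h : C.T.Lt s.1 u) :
    C.code s ∈ C.predSet u :=
  C.mem_predSet.2 ⟨C.code_mem_xC s, s, rfl, h⟩


theorem mem_HSet_of_subset {v w : ZFSet.{0}} {θ : Cardinal.{1}} (hw : w ∈ HSet θ)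
    (h : v ⊆ w) : v ∈ HSet θ := by
  refine lt_of_le_of_lt (Cardinal.mk_le_mk_of_subset fun z hz => ?_) hw
  obtain ⟨b, hzb, hbv⟩ := Relation.TransGen.tail'_iff.1 hz
  rcases Relation.reflTransGen_iff_eq_or_transGen.1 hzb with rfl | htg
  · exact Relation.TransGen.single (h hbv)
  · exact Relation.TransGen.tail htg (h hbv)

theorem empty_mem_HSet {θ : Cardinal.{1}} (hθ : 0 < θ) : (∅ : ZFSet.{0}) ∈ HSet θ := by
  have : tcSet ∅ = (∅ : ZFSet.{0}).toSet := tcSet_eq_toSet_of_transitive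
    (fun y hy => absurd hy (ZFSet.notMem_empty y))
  rw [mem_HSet, this, ZFSet.toSet_empty]
  simpa using hθ

open scoped Classical in
/-- The (successor of the) height of the node coded by `c`, if any. -/
noncomputable def codeHeight (c : ZFSet.{0}) : Ordinal.{1} :=
  if h : ∃ s : ↥C.relNodes, C.code s = c then Order.succ (C.T.nodeHeight h.choose.1) else 0

open scoped Classical in
theorem codeHeight_code (s : ↥C.relNodes) :
    C.codeHeight (C.code s) = Order.succ (C.T.nodeHeight s.1) := by
  have hex : ∃ s' : ↥C.relNodes, C.code s' = C.code s := ⟨s, rfl⟩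
  rw [codeHeight, dif_pos hex, C.code_injective hex.choose_spec]

open scoped Classical in
theorem codeHeight_lt (c : ZFSet.{0}) : C.codeHeight c < C.lam.ord := by
  rw [codeHeight]
  split
  · next h => exact C.lam_ord_isLimit.succ_lt h.choose.2.2
  · exact C.lam_ord_isLimit.pos

/-- An ordinal bound on the heights of nodes coded in `z`. -/
noncomputable def heightBound (z : ZFSet.{0}) : Ordinal.{1} :=
  ⨆ i : ↥z.toSet, C.codeHeight i.1

theorem heightBound_lt {z : ZFSet.{0}} (hz : #z.toSet ≤ C.κ) :
    C.heightBound z < C.lam.ord := by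
  refine Ordinal.iSup_lt_ord ?_ fun i => C.codeHeight_lt i.1
  rw [C.lam_isRegular.cof_eq]
  exact lt_of_le_of_lt hz (lt_trans (Order.lt_succ _) C.succ_kappa_lt_lam)

theorem height_lt_heightBound {z : ZFSet.{0}} {s : ↥C.relNodes} (h : C.code s ∈ z) :
    C.T.nodeHeight s.1 < C.heightBound z := by
  have hmem : C.code s ∈ z.toSet := h
  refine lt_of_lt_of_le (Order.lt_succ (C.T.nodeHeight s.1)) ?_
  have hle := le_ciSup (Ordinal.bddAbove_range.{1,1} _) (⟨C.code s, hmem⟩ : ↥z.toSet)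
    (f := fun i : ↥z.toSet => C.codeHeight i.1)
  rwa [C.codeHeight_code s] at hle

open scoped Classical in
/-- The function collecting the possible intersections of predecessor-code-sets with `z`. -/
noncomputable def Fz (z : ZFSet.{0}) : ZFSet.{0} :=
  if #z.toSet ≤ C.κ then
    ZFSet.sep (fun v => ∃ s : ↥C.relNodes, v = (C.predSet s.1) ∩ z) (ZFSet.powerset z)
  else ∅

open scoped Classical in
theorem mem_Fz {z v : ZFSet.{0}} (hz : #z.toSet ≤ C.κ) :
    v ∈ C.Fz z ↔ v ⊆ z ∧ ∃ s : ↥C.relNodes, v = (C.predSet s.1) ∩ z := by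
  rw [Fz, if_pos hz, ZFSet.mem_sep, ZFSet.mem_powerset]

theorem predSet_inter_eq {z : ZFSet.{0}} (hz : #z.toSet ≤ C.κ) {u s' : ZFSet.{0}}
    (hu : u ∈ C.T.nodes) (hs'u : C.T.Lt s' u)
    (hs'h : C.T.nodeHeight s' = C.heightBound z) :
    (C.predSet u) ∩ z = (C.predSet s') ∩ z := by
  apply ZFSet.ext
  intro c
  rw [ZFSet.mem_inter, ZFSet.mem_inter]
  constructor
  · rintro ⟨hcp, hcz⟩
    obtain ⟨-, w, rfl, hws⟩ := C.mem_predSet.1 hcp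
    have hwh : C.T.nodeHeight w.1 < C.heightBound z := C.height_lt_heightBound hcz
    refine ⟨?_, hcz⟩
    rcases ZFTree.pred_trichotomy hu hws hs'u with hlt | heq | hgt
    · exact C.code_mem_predSet hlt
    · rw [heq, hs'h] at hwh
      exact absurd hwh (lt_irrefl _)
    · have := ZFTree.nodeHeight_lt_of_lt (T := C.T)
        ((ZFSet.mem_toSet _ _).1 w.2.1) hgt
      rw [hs'h] at this
      exact absurd (this.trans hwh) (lt_irrefl _)
  · rintro ⟨hcp, hcz⟩
    obtain ⟨-, w, rfl, hws⟩ := C.mem_predSet.1 hcp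
    exact ⟨C.code_mem_predSet (C.T.lt_trans _ _ _ hws hs'u), hcz⟩

theorem mk_Fz_le (z : ZFSet.{0}) : #(C.Fz z).toSet ≤ Order.succ C.κ := by
  by_cases hz : #z.toSet ≤ C.κ
  · have hsub : (C.Fz z).toSet ⊆
        Set.range (fun p : ↥(C.nodesBelow (Order.succ (C.heightBound z))) =>
          (C.predSet p.1) ∩ z) := by
      intro v hv
      obtain ⟨-, s, rfl⟩ := (C.mem_Fz hz).1 hv
      by_cases hh : C.T.nodeHeight s.1 < Order.succ (C.heightBound z)
      · exact ⟨⟨s.1, s.2.1, hh⟩, rfl⟩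
      · have hγ : C.heightBound z < C.T.nodeHeight s.1 :=
          lt_of_lt_of_le (Order.lt_succ _) (not_lt.1 hh)
        obtain ⟨s', hs'lt, hs'h⟩ := ZFTree.exists_pred_at (T := C.T)
          ((ZFSet.mem_toSet _ _).1 s.2.1) hγ
        refine ⟨⟨s', (ZFSet.mem_toSet _ _).2 (ZFTree.mem_nodes_of_lt hs'lt).1,
          hs'h ▸ Order.lt_succ _⟩, ?_⟩
        exact (C.predSet_inter_eq hz ((ZFSet.mem_toSet _ _).1 s.2.1) hs'lt hs'h).symm
    refine le_trans (Cardinal.mk_le_mk_of_subset hsub) ?_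
    refine le_trans Cardinal.mk_range_le ?_
    refine le_trans (C.mk_nodesBelow_le _) ?_
    have hcard : (Order.succ (C.heightBound z)).card ≤ Order.succ C.κ :=
      C.card_le_succ_kappa_of_lt (C.lam_ord_isLimit.succ_lt (C.heightBound_lt hz))
    calc (Order.succ (C.heightBound z)).card * Order.succ C.κ
        ≤ Order.succ C.κ * Order.succ C.κ := mul_le_mul' hcard le_rfl
      _ = Order.succ C.κ := Cardinal.mul_eq_self C.aleph0_le_succ_kappa
  · rw [Fz, if_neg hz]
    rw [ZFSet.toSet_empty]
    simp

theorem Fz_mem_HSet {z : ZFSet.{0}} (hz : z ∈ HSet C.θC) : C.Fz z ∈ HSet C.θC := by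
  by_cases hc : #z.toSet ≤ C.κ
  · refine mem_HSet_of C.θ_isRegular (lt_of_le_of_lt (C.mk_Fz_le z) ?_) ?_
    · exact (C.succ_kappa_lt_lam).trans C.lam_lt_θ
    · intro v hv
      obtain ⟨hvz, -⟩ := (C.mem_Fz hc).1 hv
      exact mem_HSet_of_subset hz hvz
  · rw [Fz, if_neg hc]
    exact empty_mem_HSet (lt_of_le_of_lt (Cardinal.zero_le _) C.lam_lt_θ)

/-- The set of codes of all nodes at level `α`. -/
noncomputable def levCodes (α : Ordinal.{1}) : ZFSet.{0} :=
  ZFSet.sep (fun c => ∃ s : ↥C.relNodes, C.code s = c ∧ C.T.nodeHeight s.1 = α) C.xC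

theorem mem_levCodes {α : Ordinal.{1}} {c : ZFSet.{0}} :
    c ∈ C.levCodes α ↔ c ∈ C.xC ∧ ∃ s : ↥C.relNodes, C.code s = c ∧ C.T.nodeHeight s.1 = α :=
  ZFSet.mem_sep

theorem mk_levCodes_le (α : Ordinal.{1}) : #(C.levCodes α).toSet ≤ Order.succ C.κ := by
  have hsub : (C.levCodes α).toSet ⊆
      Set.range (fun p : {s : ↥C.relNodes // C.T.nodeHeight s.1 = α} => C.code p.1) := by
    intro c hc
    obtain ⟨-, s, rfl, hs⟩ := C.mem_levCodes.1 hc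
    exact ⟨⟨s, hs⟩, rfl⟩
  refine le_trans (Cardinal.mk_le_mk_of_subset hsub) (le_trans Cardinal.mk_range_le ?_)
  refine le_trans (Cardinal.mk_le_of_injective
    (f := fun p : {s : ↥C.relNodes // C.T.nodeHeight s.1 = α} =>
      (⟨p.1.1, p.1.2.1, p.2⟩ : ↥(C.T.level α))) ?_) (C.level_card_le α)
  intro p q h
  simp only [Subtype.mk.injEq] at h
  have h' : p.1.1 = q.1.1 := Subtype.mk.inj h
  exact Subtype.ext (Subtype.ext h')

theorem levCodes_subset (α : Ordinal.{1}) : C.levCodes α ⊆ C.xC :=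
  fun _ hz => (ZFSet.mem_sep.1 hz).1


theorem levCodes_mem_HSet (α : Ordinal.{1}) : C.levCodes α ∈ HSet C.θC :=
  C.mem_HSet_of_subset_xC (C.levCodes_subset α)

open scoped Classical in
/-- Decode a von Neumann code of an ordinal below `λ`. -/
noncomputable def mOrd (w : ZFSet.{0}) : Ordinal.{1} :=
  if h : ∃ α : Ordinal.{1}, α < C.lam.ord ∧ w = vN α then h.choose else 0

open scoped Classical in
theorem mOrd_spec {w : ZFSet.{0}} (h : ∃ α : Ordinal.{1}, α < C.lam.ord ∧ w = vN α) :
    C.mOrd w < C.lam.ord ∧ w = vN (C.mOrd w) := by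
  rw [mOrd, dif_pos h]
  exact h.choose_spec

open scoped Classical in
theorem mOrd_lt (w : ZFSet.{0}) : C.mOrd w < C.lam.ord := by
  rw [mOrd]
  split
  · next h => exact h.choose_spec.1
  · exact C.lam_ord_isLimit.pos

theorem mOrd_vN {α : Ordinal.{1}} (hα : α < C.lam.ord) : C.mOrd (vN α) = α := by
  obtain ⟨h1, h2⟩ := C.mOrd_spec ⟨α, hα, rfl⟩
  exact (vN_inj (C.lam_ord_in_range _ hα.le) (C.lam_ord_in_range _ (C.mOrd_lt _).le) h2).symm

/-- Successor-code function. -/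
noncomputable def PhiN (w : ZFSet.{0}) : ZFSet.{0} := vN (Order.succ (C.mOrd w))

theorem PhiN_vN {α : Ordinal.{1}} (hα : α < C.lam.ord) :
    C.PhiN (vN α) = vN (Order.succ α) := by rw [PhiN, C.mOrd_vN hα]

theorem PhiN_mem_HSet (w : ZFSet.{0}) : C.PhiN w ∈ HSet C.θC := by
  have h := C.lam_ord_isLimit.succ_lt (C.mOrd_lt w)
  exact vN_mem_HSet C.θ_isRegular _ (C.lam_ord_in_range _ h.le)
    (lt_of_lt_of_le (Cardinal.lt_ord.1 h) C.lam_lt_θ.le)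

/-- Level-codes function. -/
noncomputable def PhiL (w : ZFSet.{0}) : ZFSet.{0} := C.levCodes (C.mOrd w)

theorem PhiL_vN {α : Ordinal.{1}} (hα : α < C.lam.ord) :
    C.PhiL (vN α) = C.levCodes α := by rw [PhiL, C.mOrd_vN hα]

theorem PhiL_mem_HSet (w : ZFSet.{0}) : C.PhiL w ∈ HSet C.θC := C.levCodes_mem_HSet _

/-- Membership of a node-code in a ZF-set `e`. -/
def CeP (e s : ZFSet.{0}) : Prop := ∃ h : s ∈ C.relNodes, C.code ⟨s, h⟩ ∈ e

/-- `e` codes two incomparable nodes. -/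
def badPair (e : ZFSet.{0}) : Prop :=
  ∃ p : ZFSet.{0} × ZFSet.{0}, C.CeP e p.1 ∧ C.CeP e p.2 ∧ p.1 ≠ p.2 ∧
    ¬C.T.Lt p.1 p.2 ∧ ¬C.T.Lt p.2 p.1

open scoped Classical in
noncomputable def Phi1 (e : ZFSet.{0}) : ZFSet.{0} :=
  if h : C.badPair e then C.code ⟨h.choose.1, h.choose_spec.1.choose⟩ else ∅

open scoped Classical in
noncomputable def Phi2 (e : ZFSet.{0}) : ZFSet.{0} :=
  if h : C.badPair e then C.code ⟨h.choose.2, h.choose_spec.2.1.choose⟩ else ∅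

theorem Phi1_mem_HSet (e : ZFSet.{0}) : C.Phi1 e ∈ HSet C.θC := by
  rw [Phi1]
  split
  · exact mem_HSet_of_mem C.xC_mem_HSet (C.code_mem_xC _)
  · exact empty_mem_HSet (lt_of_le_of_lt (Cardinal.zero_le _) C.lam_lt_θ)

theorem Phi2_mem_HSet (e : ZFSet.{0}) : C.Phi2 e ∈ HSet C.θC := by
  rw [Phi2]
  split
  · exact mem_HSet_of_mem C.xC_mem_HSet (C.code_mem_xC _)
  · exact empty_mem_HSet (lt_of_le_of_lt (Cardinal.zero_le _) C.lam_lt_θ)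

/-- Levels below `λ` at which `e` codes no node. -/
def missingSet (e : ZFSet.{0}) : Set Ordinal.{1} :=
  { α | α < C.lam.ord ∧ ∀ s : ↥C.relNodes, C.T.nodeHeight s.1 = α → C.code s ∉ e }

open scoped Classical in
noncomputable def PhiA (e : ZFSet.{0}) : ZFSet.{0} :=
  if h : (C.missingSet e).Nonempty then vN (sInf (C.missingSet e)) else ∅

open scoped Classical in
theorem PhiA_spec {e : ZFSet.{0}} (h : (C.missingSet e).Nonempty) :
    C.PhiA e = vN (sInf (C.missingSet e)) := by rw [PhiA, dif_pos h]

theorem PhiA_mem_HSet (e : ZFSet.{0}) : C.PhiA e ∈ HSet C.θC := by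
  rw [PhiA]
  split
  · next h =>
    have hmem := csInf_mem h
    exact vN_mem_HSet C.θ_isRegular _ (C.lam_ord_in_range _ hmem.1.le)
      (lt_of_lt_of_le (Cardinal.lt_ord.1 hmem.1) C.lam_lt_θ.le)
  · exact empty_mem_HSet (lt_of_le_of_lt (Cardinal.zero_le _) C.lam_lt_θ)

/-- The combined closure function for the club argument. -/
def gFun (w : ZFSet.{0}) : Set ZFSet.{0} :=
  { u | u = C.Fz w ∨ u = C.PhiN w ∨ u = C.PhiL w ∨ u = C.Phi1 w ∨ u = C.Phi2 w ∨
    u = C.PhiA w ∨ (u ∈ w.toSet ∧ u ∈ HSet C.θC ∧ #w.toSet ≤ Order.succ C.κ) }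

theorem gFun_subset_HSet {w : ZFSet.{0}} (hw : w ∈ HSet C.θC) : C.gFun w ⊆ HSet C.θC := by
  rintro u (rfl | rfl | rfl | rfl | rfl | rfl | ⟨-, hu, -⟩)
  · exact C.Fz_mem_HSet hw
  · exact C.PhiN_mem_HSet w
  · exact C.PhiL_mem_HSet w
  · exact C.Phi1_mem_HSet w
  · exact C.Phi2_mem_HSet w
  · exact C.PhiA_mem_HSet w
  · exact hu

theorem mk_gFun_lt (w : ZFSet.{0}) : #(C.gFun w) < C.lam := by
  have hsub : C.gFun w ⊆
      ({C.Fz w, C.PhiN w, C.PhiL w, C.Phi1 w, C.Phi2 w, C.PhiA w} : Set ZFSet.{0}) ∪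
      { u | u ∈ w.toSet ∧ u ∈ HSet C.θC ∧ #w.toSet ≤ Order.succ C.κ } := by
    rintro u (rfl | rfl | rfl | rfl | rfl | rfl | hu)
    · exact Or.inl (by simp)
    · exact Or.inl (by simp)
    · exact Or.inl (by simp)
    · exact Or.inl (by simp)
    · exact Or.inl (by simp)
    · exact Or.inl (by simp)
    · exact Or.inr hu
  refine lt_of_le_of_lt (Cardinal.mk_le_mk_of_subset hsub) ?_
  refine lt_of_le_of_lt (Cardinal.mk_union_le _ _) ?_
  refine Cardinal.add_lt_of_lt C.aleph0_le_lam ?_ ?_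
  · exact lt_of_lt_of_le (Set.Finite.lt_aleph0 (Set.toFinite _)) C.aleph0_le_lam
  · by_cases hc : #w.toSet ≤ Order.succ C.κ
    · refine lt_of_le_of_lt (le_trans (Cardinal.mk_le_mk_of_subset
        (fun u hu => hu.1)) ?_) C.succ_kappa_lt_lam
      exact hc
    · have : { u | u ∈ w.toSet ∧ u ∈ HSet C.θC ∧ #w.toSet ≤ Order.succ C.κ } = ∅ := by
        ext u
        simp only [Set.mem_setOf_eq, Set.mem_empty_iff_false, iff_false]
        rintro ⟨-, -, h⟩
        exact hc h
      rw [this]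
      simpa using C.lam_isRegular.pos


end Ctx


/-- Let `κ` be a regular cardinal with `κ^{<κ} = κ`.  If
`GMP_{κ⁺⁺}(κ⁺³)` holds, then the tree property `TP(κ⁺⁺)` holds: every
`κ⁺⁺`-tree has a cofinal branch. -/
theorem GMP_implies_treeProperty (κ : Cardinal.{1}) (hreg : κ.IsRegular)
    (hpow : κ ^< κ = κ)
    (hgmp : GMP κ (Order.succ (Order.succ (Order.succ κ)))) :
    ∀ T : ZFTree, ZFTree.IsLambdaTree (Order.succ (Order.succ κ)) T →
      ∃ B : Set ZFSet.{0}, T.IsCofinalBranch B := by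
  classical
  intro T hT
  set C : Ctx := ⟨κ, hreg, T, hT.1, hT.2⟩ with hC
  have hclub := isClubIn_closure C.lam_isRegular C.aleph0_lt_lam C.gFun C.xC C.xC_mem_HSet
    (fun w hw => C.gFun_subset_HSet hw) C.mk_gFun_lt
  obtain ⟨M, hMmem⟩ := hgmp.2 _ hclub
  obtain ⟨⟨hMsmall, hGM⟩, -, hxM, hclM⟩ := hMmem
  have hMH : M ⊆ HSet C.θC := hMsmall.1
  have hsmallM : ∀ w ∈ M, #w.toSet ≤ Order.succ C.κ → w.toSet ⊆ M := by
    intro w hw hsm u hu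
    exact hclM w hw (Or.inr (Or.inr (Or.inr (Or.inr (Or.inr (Or.inr
      ⟨hu, mem_HSet_of_mem (hMH hw) hu, hsm⟩))))))
  have hFzM : ∀ w ∈ M, C.Fz w ∈ M := fun w hw => hclM w hw (Or.inl rfl)
  have hPhiNM : ∀ w ∈ M, C.PhiN w ∈ M := fun w hw => hclM w hw (Or.inr (Or.inl rfl))
  have hPhiLM : ∀ w ∈ M, C.PhiL w ∈ M := fun w hw => hclM w hw (Or.inr (Or.inr (Or.inl rfl)))
  have hPhi1M : ∀ w ∈ M, C.Phi1 w ∈ M :=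
    fun w hw => hclM w hw (Or.inr (Or.inr (Or.inr (Or.inl rfl))))
  have hPhi2M : ∀ w ∈ M, C.Phi2 w ∈ M :=
    fun w hw => hclM w hw (Or.inr (Or.inr (Or.inr (Or.inr (Or.inl rfl)))))
  have hPhiAM : ∀ w ∈ M, C.PhiA w ∈ M :=
    fun w hw => hclM w hw (Or.inr (Or.inr (Or.inr (Or.inr (Or.inr (Or.inl rfl))))))
  set δ : Ordinal.{1} := ⨆ m : ↥M, C.mOrd m.1 with hδdef
  have hδlt : δ < C.lam.ord := by
    refine Ordinal.iSup_lt_ord ?_ fun m => C.mOrd_lt m.1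
    rw [C.lam_isRegular.cof_eq]
    have hcard : #↥M = Order.succ C.κ := hGM.card
    rw [hcard]
    exact C.succ_kappa_lt_lam
  have hInMle : ∀ α, α < C.lam.ord → vN α ∈ M → α ≤ δ := by
    intro α hα hm
    have hle := le_ciSup (Ordinal.bddAbove_range.{1,1} _) (⟨vN α, hm⟩ : ↥M)
      (f := fun m : ↥M => C.mOrd m.1)
    rwa [C.mOrd_vN hα] at hle
  have hInMlt : ∀ α, α < C.lam.ord → vN α ∈ M → α < δ := by
    intro α hα hm
    have hsucc : vN (Order.succ α) ∈ M := by
      have hx := hPhiNM _ hm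
      rwa [C.PhiN_vN hα] at hx
    exact lt_of_lt_of_le (Order.lt_succ α) (hInMle _ (C.lam_ord_isLimit.succ_lt hα) hsucc)
  obtain ⟨t, htn, hth⟩ := C.level_nonempty' hδlt
  have htnode : t ∈ C.T.nodes := (ZFSet.mem_toSet _ _).1 htn
  set d := C.predSet t with hd
  have happrox : IsApproximated κ M d := by
    intro z hzM hzsub hzcard
    have hsub : (C.Fz z).toSet ⊆ M := hsmallM _ (hFzM z hzM) (C.mk_Fz_le z)
    refine hsub ((ZFSet.mem_toSet _ _).2 ((C.mem_Fz hzcard).2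
      ⟨fun c hc => (ZFSet.mem_inter.1 hc).2, ⟨t, htn, hth ▸ hδlt⟩, rfl⟩))
  obtain ⟨e, heM, hee⟩ := hGM.guess _ hxM d (C.predSet_subset t) happrox
  have hnobad : ¬C.badPair e := by
    intro hb
    have hp := hb.choose_spec
    have hall : ∀ (s : ZFSet.{0}) (hs : s ∈ C.relNodes), C.code ⟨s, hs⟩ ∈ e →
        C.code ⟨s, hs⟩ ∈ M → C.T.Lt s t := by
      intro s hs hseM hsM
      have hmem : C.code ⟨s, hs⟩ ∈ e.toSet ∩ M := ⟨(ZFSet.mem_toSet _ _).2 hseM, hsM⟩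
      rw [hee] at hmem
      obtain ⟨-, u, hcu, hul⟩ := C.mem_predSet.1 ((ZFSet.mem_toSet _ _).1 hmem.1)
      have hu1 : u = ⟨s, hs⟩ := C.code_injective hcu
      rwa [hu1] at hul
    have h1M : C.code ⟨hb.choose.1, hb.choose_spec.1.choose⟩ ∈ M := by
      have hx := hPhi1M e heM
      rwa [Ctx.Phi1, dif_pos hb] at hx
    have h2M : C.code ⟨hb.choose.2, hb.choose_spec.2.1.choose⟩ ∈ M := by
      have hx := hPhi2M e heM
      rwa [Ctx.Phi2, dif_pos hb] at hx
    have hl1 : C.T.Lt hb.choose.1 t :=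
      hall _ hb.choose_spec.1.choose hb.choose_spec.1.choose_spec h1M
    have hl2 : C.T.Lt hb.choose.2 t :=
      hall _ hb.choose_spec.2.1.choose hb.choose_spec.2.1.choose_spec h2M
    rcases ZFTree.comparable_of_lt_same htnode hl1 hl2 hp.2.2.1 with hcc | hcc
    · exact hp.2.2.2.1 hcc
    · exact hp.2.2.2.2 hcc
  have hnomiss : ∀ α < C.lam.ord, ∃ s : ↥C.relNodes,
      C.T.nodeHeight s.1 = α ∧ C.code s ∈ e := by
    intro α hα
    by_contra hmiss
    push_neg at hmiss
    have hne : (C.missingSet e).Nonempty := ⟨α, hα, fun s hs => hmiss s hs⟩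
    have hα₀ := csInf_mem hne
    have hA : vN (sInf (C.missingSet e)) ∈ M := by
      have hx := hPhiAM e heM
      rwa [C.PhiA_spec hne] at hx
    have hα₀δ : sInf (C.missingSet e) < δ := hInMlt _ hα₀.1 hA
    obtain ⟨s', hs'lt, hs'h⟩ := ZFTree.exists_pred_at htnode
      (show sInf (C.missingSet e) < C.T.nodeHeight t from hth ▸ hα₀δ)
    have hs'rel : s' ∈ C.relNodes :=
      ⟨(ZFSet.mem_toSet _ _).2 (ZFTree.mem_nodes_of_lt hs'lt).1, hs'h ▸ hα₀.1⟩
    have hlev : C.levCodes (sInf (C.missingSet e)) ∈ M := by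
      have hx := hPhiLM _ hA
      rwa [C.PhiL_vN hα₀.1] at hx
    have hcM : C.code ⟨s', hs'rel⟩ ∈ M :=
      hsmallM _ hlev (C.mk_levCodes_le _) ((ZFSet.mem_toSet _ _).2
        (C.mem_levCodes.2 ⟨C.code_mem_xC _, ⟨s', hs'rel⟩, rfl, hs'h⟩))
    have hce : C.code ⟨s', hs'rel⟩ ∈ e.toSet := by
      have hmem : C.code ⟨s', hs'rel⟩ ∈ d.toSet ∩ M :=
        ⟨(ZFSet.mem_toSet _ _).2 (C.code_mem_predSet hs'lt), hcM⟩
      rw [← hee] at hmem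
      exact hmem.1
    exact hα₀.2 ⟨s', hs'rel⟩ hs'h ((ZFSet.mem_toSet _ _).1 hce)
  refine ⟨{ s | C.CeP e s }, ?_, ?_, ?_⟩
  · rintro s ⟨hs, -⟩
    exact hs.1
  · rintro a ⟨ha, hae⟩ b ⟨hb, hbe⟩ hne
    by_contra hcon
    push_neg at hcon
    exact hnobad ⟨(a, b), ⟨ha, hae⟩, ⟨hb, hbe⟩, hne, hcon.1, hcon.2⟩
  · intro α hα
    rw [hT.1] at hα
    obtain ⟨s, hsh, hse⟩ := hnomiss α hα
    exact ⟨s.1, ⟨s.2, hse⟩, hsh⟩
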